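/- For n ≥ 2, let M_n be the n×n real matrix with M_{1,1} = 2, M_{2,2} = 1, M_{1,3} = 1, M_{3,1} = -1, M_{2,3} = 1, M_{3,2} = -1, M_{i,i} = 1 and M_{i,i+1} = 1, M_{i+1,i} = -1 for 3 ≤ i ≤ n-1, M_{n,n} = 1, all other entries 0. Then det(M_n) = f_n + ℓ_{n-1}, where f_n is the n-th Fibonacci number and ℓ_{n-1} the (n-1)-th Lucas number. -/

import Mathlib

open Matrix

def gEnt (i j : ℕ) : ℝ :=
  if i = j then (if i = 0 then (2 : ℝ) else 1)
  else if (i = 0 ∧ j = 2) ∨ (i = 1 ∧ j = 2) ∨ (2 ≤ i ∧ j = i + 1) then 1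
  else if (j = 0 ∧ i = 2) ∨ (j = 1 ∧ i = 2) ∨ (2 ≤ j ∧ i = j + 1) then -1
  else 0

def Mt (n : ℕ) : Matrix (Fin n) (Fin n) ℝ := Matrix.of fun i j => gEnt i.val j.val

lemma gEnt_diag {i : ℕ} (h : i ≠ 0) : gEnt i i = 1 := by simp [gEnt, h]

lemma gEnt_super {i j : ℕ} (h2 : 2 ≤ i) (h : j = i + 1) : gEnt i j = 1 := by
  unfold gEnt; rw [if_neg (by omega), if_pos (by omega)]

lemma gEnt_sub {i j : ℕ} (h2 : 2 ≤ j) (h : i = j + 1) : gEnt i j = -1 := by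
  unfold gEnt; rw [if_neg (by omega), if_neg (by omega), if_pos (by omega)]

lemma gEnt_zero_low {i j : ℕ} (hij : j + 2 ≤ i) (hi : i ≠ 2) : gEnt i j = 0 := by
  unfold gEnt; rw [if_neg (by omega), if_neg (by omega), if_neg (by omega)]

lemma gEnt_zero_high {i j : ℕ} (hij : i + 2 ≤ j) (hj : ¬(i = 0 ∧ j = 2)) : gEnt i j = 0 := by
  unfold gEnt; rw [if_neg (by omega), if_neg (by omega), if_neg (by omega)]

lemma val_succAbove {n : ℕ} (p : Fin (n+1)) (i : Fin n) :
    ((p.succAbove i : Fin (n+1)) : ℕ) = if (i : ℕ) < (p : ℕ) then (i : ℕ) else (i : ℕ) + 1 := by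
  by_cases h : (i : ℕ) < (p : ℕ)
  · rw [if_pos h, Fin.succAbove_of_castSucc_lt _ _ (by simp [Fin.lt_def, h])]
    simp
  · rw [if_neg h, Fin.succAbove_of_le_castSucc _ _ (by simp [Fin.le_def]; omega)]
    simp

lemma Mt2 : (Mt 2).det = 2 := by
  rw [Matrix.det_fin_two]; norm_num [Mt, gEnt]

lemma Mt3 : (Mt 3).det = 5 := by
  rw [Matrix.det_fin_three]; norm_num [Mt, gEnt]
  split_ifs with h
  · exact absurd h (by decide)
  · norm_num

lemma Mt_det_rec (k : ℕ) : (Mt (k+4)).det = (Mt (k+3)).det + (Mt (k+2)).det := by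
  have hrev : ∀ (m : ℕ) (i : Fin m), ((Fin.revPerm i : Fin m) : ℕ) = m - 1 - (i : ℕ) := by
    intro m i
    show ((Fin.rev i : Fin m) : ℕ) = m - 1 - (i : ℕ)
    rw [Fin.val_rev]; omega
  set N : Matrix (Fin (k+4)) (Fin (k+4)) ℝ :=
    (Mt (k+4)).submatrix Fin.revPerm Fin.revPerm with hNdef
  have hN : (Mt (k+4)).det = N.det := (Matrix.det_submatrix_equiv_self _ _).symm
  have hNval : ∀ i j : Fin (k+4), N i j = gEnt (k+3 - (i:ℕ)) (k+3 - (j:ℕ)) := by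
    intro i j
    simp only [hNdef, Matrix.submatrix_apply, Mt, Matrix.of_apply]
    rw [hrev, hrev]
    congr 1 <;> omega
  have e00 : N 0 0 = 1 := by
    rw [hNval]; simp only [Fin.val_zero, Nat.sub_zero]; exact gEnt_diag (by omega)
  have e01 : N 0 (Fin.succ (0 : Fin (k+3))) = -1 := by
    rw [hNval]; simp only [Fin.val_zero, Fin.val_succ, Nat.sub_zero]
    rw [show k + 3 - (0 + 1) = k + 2 from by omega]
    exact gEnt_sub (by omega) (by omega)
  have e0rest : ∀ j : Fin (k+2), N 0 (Fin.succ (Fin.succ j)) = 0 := by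
    intro j; have hj := j.isLt
    rw [hNval]; simp only [Fin.val_zero, Fin.val_succ, Nat.sub_zero]
    exact gEnt_zero_low (by omega) (by omega)
  have hA : (N.submatrix Fin.succ (Fin.succAbove (0 : Fin (k+4)))) =
      (Mt (k+3)).submatrix Fin.revPerm Fin.revPerm := by
    ext i j
    rw [Fin.succAbove_zero]
    simp only [Matrix.submatrix_apply]
    rw [hNval]
    simp only [Fin.val_succ, Mt, Matrix.of_apply]
    rw [hrev, hrev]
    congr 1 <;> omega
  have hdetA : (N.submatrix Fin.succ (Fin.succAbove (0 : Fin (k+4)))).det = (Mt (k+3)).det := by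
    rw [hA, Matrix.det_submatrix_equiv_self]
  -- the second minor B
  have eB0 : (N.submatrix Fin.succ (Fin.succ (0 : Fin (k+3))).succAbove) 0 0 = 1 := by
    simp only [Matrix.submatrix_apply]
    rw [hNval]
    rw [val_succAbove]
    simp only [Fin.val_succ, Fin.val_zero]
    norm_num
    exact gEnt_super (by omega) (by omega)
  have eBrest : ∀ i : Fin (k+2),
      (N.submatrix Fin.succ (Fin.succ (0 : Fin (k+3))).succAbove) i.succ 0 = 0 := by
    intro i; have hi := i.isLt
    simp only [Matrix.submatrix_apply]
    rw [hNval, val_succAbove]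
    simp only [Fin.val_succ, Fin.val_zero]
    norm_num
    exact gEnt_zero_high (by omega) (by omega)
  have hC : ((N.submatrix Fin.succ (Fin.succ (0 : Fin (k+3))).succAbove).submatrix
        (Fin.succAbove (0 : Fin (k+3))) Fin.succ)
      = (Mt (k+2)).submatrix Fin.revPerm Fin.revPerm := by
    ext i j
    have hi := i.isLt; have hj := j.isLt
    simp only [Matrix.submatrix_apply]
    rw [Fin.succAbove_zero]
    rw [hNval, val_succAbove]
    simp only [Fin.val_succ, Fin.val_zero, Mt, Matrix.of_apply]
    rw [hrev, hrev]
    simp only [show ¬ ((j:ℕ) + 1 < 0 + 1) from by omega, if_false]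
    congr 1 <;> omega
  have hdetC : ((N.submatrix Fin.succ (Fin.succ (0 : Fin (k+3))).succAbove).submatrix
        (Fin.succAbove (0 : Fin (k+3))) Fin.succ).det = (Mt (k+2)).det := by
    rw [hC, Matrix.det_submatrix_equiv_self]
  have hdetB : (N.submatrix Fin.succ (Fin.succ (0 : Fin (k+3))).succAbove).det
      = (Mt (k+2)).det := by
    rw [Matrix.det_succ_column_zero, Fin.sum_univ_succ]
    simp only [eB0, eBrest, hdetC, Fin.val_zero, pow_zero, one_mul, mul_zero, zero_mul,
      Finset.sum_const_zero, add_zero, mul_one]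
  rw [hN, Matrix.det_succ_row_zero, Fin.sum_univ_succ, Fin.sum_univ_succ]
  simp only [e00, e01, e0rest, hdetA, hdetB, Fin.val_zero, Fin.val_succ, pow_zero, pow_one,
    one_mul, mul_one, mul_zero, zero_mul, Finset.sum_const_zero, add_zero]
  ring

theorem det_caterpillar_first_twisted (n : ℕ) (hn : 2 ≤ n)
    (f l : ℕ → ℝ) (hf1 : f 1 = 1) (hf2 : f 2 = 1)
    (hf : ∀ k, 3 ≤ k → f k = f (k - 1) + f (k - 2))
    (hl1 : l 1 = 1) (hl2 : l 2 = 3)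
    (hl : ∀ k, 3 ≤ k → l k = l (k - 1) + l (k - 2)) :
    (Matrix.of (fun i j : Fin n =>
      if i = j then (if i.val = 0 then (2 : ℝ) else 1)
      else if (i.val = 0 ∧ j.val = 2) ∨ (i.val = 1 ∧ j.val = 2) ∨
              (2 ≤ i.val ∧ j.val = i.val + 1) then 1
      else if (j.val = 0 ∧ i.val = 2) ∨ (j.val = 1 ∧ i.val = 2) ∨
              (2 ≤ j.val ∧ i.val = j.val + 1) then -1
      else 0)).det = f n + l (n - 1) := by
  have hM : (Matrix.of (fun i j : Fin n =>
      if i = j then (if i.val = 0 then (2 : ℝ) else 1)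
      else if (i.val = 0 ∧ j.val = 2) ∨ (i.val = 1 ∧ j.val = 2) ∨
              (2 ≤ i.val ∧ j.val = i.val + 1) then 1
      else if (j.val = 0 ∧ i.val = 2) ∨ (j.val = 1 ∧ i.val = 2) ∨
              (2 ≤ j.val ∧ i.val = j.val + 1) then -1
      else 0)) = Mt n := by
    ext i j
    simp only [Matrix.of_apply, Mt, gEnt, Fin.ext_iff]
  rw [hM]
  have main : ∀ k : ℕ, (Mt (k+2)).det = f (k+2) + l (k+1) ∧
      (Mt (k+3)).det = f (k+3) + l (k+2) := by
    intro k
    induction k with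
    | zero =>
      constructor
      · rw [Mt2, hf2, hl1]; norm_num
      · rw [Mt3]
        have hf3 : f 3 = f 2 + f 1 := hf 3 (by norm_num)
        rw [hf3, hf1, hf2, hl2]; norm_num
    | succ k ih =>
      refine ⟨ih.2, ?_⟩
      have hfe : f (k+4) = f (k+3) + f (k+2) := hf (k+4) (by omega)
      have hle : l (k+3) = l (k+2) + l (k+1) := hl (k+3) (by omega)
      have hrec : (Mt (k+4)).det = (Mt (k+3)).det + (Mt (k+2)).det := Mt_det_rec k
      show (Mt (k+4)).det = f (k+4) + l (k+3)
      rw [hrec, ih.1, ih.2, hfe, hle]; ring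
  obtain ⟨k, rfl⟩ : ∃ k, n = k + 2 := ⟨n - 2, by omega⟩
  exact (main k).1
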